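/- For all r, s ∈ ℤ and every β ∈ ℤ, the trace cocycle evaluated on the β-twisted Virasoro generators satisfies c_Lie(L_r^{(β)}, L_s^{(β)}) = n·δ_{r,−s}·((r³−r)/6)·(1−6β+6β²), where L_r^{(β)} is the endomorphism of V given by v ↦ z^{r+1} • v′ + β(r+1)·z^r • v. -/

import Mathlib

noncomputable section

abbrev K : Type := LaurentSeries ℂ

abbrev V (n : ℕ) : Type := Fin n → K

/-- The formal derivative of a Laurent series. -/
def fd (f : K) : K :=
  ⟨fun k => ((k + 1 : ℤ) : ℂ) * f.coeff (k + 1), by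
    apply Set.IsPWO.mono (f.isPWO_support.image_of_monotone
      (f := fun x => x - 1) (fun _ _ h => sub_le_sub_right h 1))
    intro k hk
    have : f.coeff (k + 1) ≠ 0 := by
      intro h
      simp [Function.mem_support, h] at hk
    exact ⟨k + 1, this, by ring⟩⟩

/-- Truncation of a Laurent series to its coefficients in negative degrees: the
projection onto `K₋` along `K₊`. -/
def tneg (f : K) : K :=
  ⟨fun k => if k < 0 then f.coeff k else 0, by
    refine f.isPWO_support.mono (fun k hk => ?_)
    simp only [Function.mem_support] at hk ⊢
    by_cases h : k < 0
    · simpa [h] using hk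
    · simp [h] at hk⟩

/-- Truncation of a Laurent series to its coefficients in non-negative degrees: the
projection onto `K₊` along `K₋`. -/
def tpos (f : K) : K :=
  ⟨fun k => if 0 ≤ k then f.coeff k else 0, by
    refine f.isPWO_support.mono (fun k hk => ?_)
    simp only [Function.mem_support] at hk ⊢
    by_cases h : (0:ℤ) ≤ k
    · simpa [h] using hk
    · simp [h] at hk⟩

/-- Componentwise projection of `V` onto `V₋` along `V₊`. -/
def projM {n : ℕ} (v : V n) : V n := fun i => tneg (v i)

/-- Componentwise projection of `V` onto `V₊` along `V₋`. -/
def projP {n : ℕ} (v : V n) : V n := fun i => tpos (v i)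

/-- The basis vector `z^m · e_i` of `V`. -/
def bas (n : ℕ) (m : ℤ) (i : Fin n) : V n :=
  fun j => if j = i then HahnSeries.single m 1 else 0

/-- `T₁^{+−} ∘ T₂^{−+} − T₂^{+−} ∘ T₁^{−+}` as a map `V₋ → V₋` (evaluated through the
projections onto `V₋` and `V₊`). -/
def commPM {n : ℕ} (T₁ T₂ : V n → V n) (v : V n) : V n :=
  projM (T₁ (projP (T₂ (projM v)))) - projM (T₂ (projP (T₁ (projM v))))

/-- The trace cocycle `c_Lie(T₁, T₂) = Tr(T₁^{+−} T₂^{−+} − T₂^{+−} T₁^{−+})`, computed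
as the (finitely supported) sum of the diagonal coefficients in the basis
`{z^m e_i : m < 0, i}` of `V₋`. -/
def cLie (n : ℕ) (T₁ T₂ : V n → V n) : ℂ :=
  ∑ᶠ (m : ℤ) (_ : m < 0) (i : Fin n), ((commPM T₁ T₂ (bas n m i)) i).coeff m

/-- The `β`-twisted Virasoro operator `L_r^{(β)} : v ↦ z^{r+1} • v′ + β(r+1) z^r • v`,
acting componentwise on `V`. -/
def Lb (n : ℕ) (β r : ℤ) : V n → V n :=
  fun v i => HahnSeries.single (r + 1) 1 * fd (v i)
    + (β * (r + 1)) • (HahnSeries.single r 1 * v i)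

-- Auxiliary lemmas


open HahnSeries

lemma fd_coeff (f : K) (k : ℤ) : (fd f).coeff k = ((k+1 : ℤ) : ℂ) * f.coeff (k+1) := rfl
lemma tneg_coeff (f : K) (k : ℤ) : (tneg f).coeff k = if k < 0 then f.coeff k else 0 := rfl
lemma tpos_coeff (f : K) (k : ℤ) : (tpos f).coeff k = if 0 ≤ k then f.coeff k else 0 := rfl

lemma fd_zero : fd 0 = 0 := by ext k; rw [fd_coeff]; simp
lemma tneg_zero : tneg 0 = 0 := by ext k; rw [tneg_coeff]; simp
lemma tpos_zero : tpos 0 = 0 := by ext k; rw [tpos_coeff]; simp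

lemma fd_single (a : ℤ) (c : ℂ) : fd (single a c : K) = single (a-1) ((a:ℂ)*c) := by
  ext k
  rw [fd_coeff]
  simp only [coeff_single]
  by_cases h : k = a - 1
  · subst h
    rw [if_pos (by ring), if_pos rfl]
    push_cast
    ring
  · rw [if_neg (by omega), if_neg h, mul_zero]

lemma tneg_single (a : ℤ) (c : ℂ) :
    tneg (single a c : K) = single a (if a < 0 then c else 0) := by
  ext k
  rw [tneg_coeff]
  simp only [coeff_single]
  by_cases h : k = a
  · subst h; split <;> simp_all
  · simp [h]

lemma tpos_single (a : ℤ) (c : ℂ) :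
    tpos (single a c : K) = single a (if 0 ≤ a then c else 0) := by
  ext k
  rw [tpos_coeff]
  simp only [coeff_single]
  by_cases h : k = a
  · subst h; split <;> simp_all
  · simp [h]

lemma zsmul_single (t a : ℤ) (c : ℂ) :
    t • (single a c : K) = single a ((t:ℂ)*c) := by
  rw [← Int.cast_smul_eq_zsmul ℂ]
  ext k
  rw [HahnSeries.coeff_smul]
  simp [coeff_single]

lemma one_mul_single (b a : ℤ) (c : ℂ) :
    (single b 1 : K) * single a c = single (b+a) c := by
  rw [single_mul_single, one_mul]

/-- elementary vectors -/
def eV (n : ℕ) (m : ℤ) (c : ℂ) (i : Fin n) : V n :=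
  fun j => if j = i then single m c else 0

lemma bas_eq (n : ℕ) (m : ℤ) (i : Fin n) : bas n m i = eV n m 1 i := rfl

lemma Lb_eV (n : ℕ) (β r m : ℤ) (c : ℂ) (i : Fin n) :
    Lb n β r (eV n m c i) = eV n (m+r) (((m:ℂ) + (β:ℂ)*((r:ℂ)+1))*c) i := by
  funext j
  simp only [Lb, eV]
  by_cases h : j = i
  · simp only [if_pos h]
    rw [fd_single, one_mul_single, one_mul_single, zsmul_single]
    ext k
    simp only [HahnSeries.coeff_add, coeff_single]
    by_cases hk : k = m + r
    · subst hk
      rw [if_pos (by ring), if_pos (by ring), if_pos rfl]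
      push_cast
      ring
    · rw [if_neg (by omega), if_neg (by omega), if_neg hk, add_zero]
  · simp only [if_neg h]
    rw [fd_zero]
    simp

lemma projM_eV (n : ℕ) (m : ℤ) (c : ℂ) (i : Fin n) :
    projM (eV n m c i) = eV n m (if m < 0 then c else 0) i := by
  funext j
  simp only [projM, eV]
  by_cases h : j = i
  · simp only [if_pos h]
    rw [tneg_single]
  · simp only [if_neg h]
    rw [tneg_zero]

lemma projP_eV (n : ℕ) (m : ℤ) (c : ℂ) (i : Fin n) :
    projP (eV n m c i) = eV n m (if 0 ≤ m then c else 0) i := by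
  funext j
  simp only [projP, eV]
  by_cases h : j = i
  · simp only [if_pos h]
    rw [tpos_single]
  · simp only [if_neg h]
    rw [tpos_zero]

lemma coeff_commPM (n : ℕ) (β r s m : ℤ) (i : Fin n) (hm : m < 0) :
    ((commPM (Lb n β r) (Lb n β s) (bas n m i)) i).coeff m =
      if r + s = 0 then
        (if 0 ≤ m+s then ((m:ℂ)+(s:ℂ)+(β:ℂ)*((r:ℂ)+1)) * ((m:ℂ)+(β:ℂ)*((s:ℂ)+1)) else 0)
        - (if 0 ≤ m+r then ((m:ℂ)+(r:ℂ)+(β:ℂ)*((s:ℂ)+1)) * ((m:ℂ)+(β:ℂ)*((r:ℂ)+1)) else 0)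
      else 0 := by
  have e1 : (commPM (Lb n β r) (Lb n β s) (bas n m i)) i =
      (projM (Lb n β r (projP (Lb n β s (projM (bas n m i))))) i)
      - (projM (Lb n β s (projP (Lb n β r (projM (bas n m i))))) i) := rfl
  rw [e1, bas_eq]
  simp only [projM_eV, projP_eV, Lb_eV, if_pos hm]
  simp only [eV, if_pos (rfl : i = i), if_true]
  rw [HahnSeries.coeff_sub]
  simp only [coeff_single]
  by_cases hrs : r + s = 0
  · rw [if_pos hrs, if_pos (by omega : m = m + s + r), if_pos (by omega : m = m + r + s),
      if_pos (by omega : m + s + r < 0), if_pos (by omega : m + r + s < 0)]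
    split_ifs <;> push_cast <;> ring
  · rw [if_neg hrs, if_neg (by omega : ¬ m = m + s + r), if_neg (by omega : ¬ m = m + r + s),
      sub_zero]


lemma sum_Ico_neg (t : ℕ) (g : ℤ → ℂ) :
    ∑ m ∈ Finset.Ico (-(t:ℤ)) 0, g m = ∑ k ∈ Finset.range t, g (-(k:ℤ)-1) := by
  have h : Finset.Ico (-(t:ℤ)) 0 =
      (Finset.range t).map ⟨fun k : ℕ => -(k:ℤ)-1, fun a b hab => by dsimp at hab; omega⟩ := by
    ext m
    simp only [Finset.mem_Ico, Finset.mem_map, Finset.mem_range, Function.Embedding.coeFn_mk]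
    constructor
    · rintro ⟨h1, h2⟩
      exact ⟨(-m-1).toNat, by omega, by change -(((-m-1).toNat : ℕ):ℤ) - 1 = m; omega⟩
    · rintro ⟨k, hk, rfl⟩
      change -(t:ℤ) ≤ -(k:ℤ)-1 ∧ -(k:ℤ)-1 < 0
      omega
  rw [h, Finset.sum_map]
  rfl

lemma sum_range_quad (t : ℕ) (a b : ℂ) :
    ∑ k ∈ Finset.range t, ((-(k:ℂ)-1)+a)*((-(k:ℂ)-1)+b)
      = (t:ℂ)*((t:ℂ)+1)*(2*(t:ℂ)+1)/6 - (a+b)*((t:ℂ)*((t:ℂ)+1)/2) + a*b*(t:ℂ) := by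
  induction t with
  | zero => simp
  | succ t ih =>
    rw [Finset.sum_range_succ, ih]
    push_cast
    ring

lemma cLie_eq_finsum (n : ℕ) (β r s : ℤ) :
    cLie n (Lb n β r) (Lb n β s) = ∑ᶠ m : ℤ, (if m < 0 then (n:ℂ) *
      (if r + s = 0 then
        (if 0 ≤ m+s then ((m:ℂ)+(s:ℂ)+(β:ℂ)*((r:ℂ)+1)) * ((m:ℂ)+(β:ℂ)*((s:ℂ)+1)) else 0)
        - (if 0 ≤ m+r then ((m:ℂ)+(r:ℂ)+(β:ℂ)*((s:ℂ)+1)) * ((m:ℂ)+(β:ℂ)*((r:ℂ)+1)) else 0)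
      else 0) else 0) := by
  rw [cLie]
  apply finsum_congr
  intro m
  rw [finsum_eq_if]
  by_cases hm : m < 0
  · rw [if_pos hm, if_pos hm, finsum_eq_sum_of_fintype,
      Finset.sum_congr rfl (fun i _ => coeff_commPM n β r s m i hm),
      Finset.sum_const, Finset.card_univ, Fintype.card_fin, nsmul_eq_mul]
  · rw [if_neg hm, if_neg hm]


/-- The value of the trace cocycle on the `β`-twisted Virasoro generators:
`c_Lie(L_r^{(β)}, L_s^{(β)}) = n · δ_{r,−s} · ((r³−r)/6) · (1−6β+6β²)`. -/
theorem cLie_virasoro (n : ℕ) (hn : 1 ≤ n) (r s β : ℤ) :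
    cLie n (Lb n β r) (Lb n β s) =
      if r = -s then
        (n : ℂ) * (((r : ℂ) ^ 3 - r) / 6) * (1 - 6 * (β : ℂ) + 6 * (β : ℂ) ^ 2)
      else 0 := by
  rw [cLie_eq_finsum n β r s]
  by_cases hrs : r = -s
  · rw [if_pos hrs]
    subst hrs
    refine (finsum_eq_sum_of_support_subset _ (s := Finset.Ico (-|s|) 0) ?_).trans ?_
    · intro m hm
      simp only [Function.mem_support] at hm
      simp only [Finset.coe_Ico, Set.mem_Ico]
      by_contra hc
      apply hm
      have habs1 := le_abs_self s
      have habs2 := neg_abs_le s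
      by_cases hm0 : m < 0
      · rw [if_pos hm0, if_neg (show ¬ (0:ℤ) ≤ m + s by omega),
          if_neg (show ¬ (0:ℤ) ≤ m + -s by omega)]
        simp
      · rw [if_neg hm0]
    · rcases lt_trichotomy s 0 with hs | hs | hs
      · -- s < 0
        set t : ℕ := (-s).toNat with htdef
        have ht : (t : ℤ) = -s := Int.toNat_of_nonneg (by omega)
        have hterm : ∀ m ∈ Finset.Ico (-|s|) 0,
            (if m < 0 then (n:ℂ) *
              (if -s + s = 0 then
                (if 0 ≤ m+s then ((m:ℂ)+(s:ℂ)+(β:ℂ)*((↑(-s):ℂ)+1)) * ((m:ℂ)+(β:ℂ)*((s:ℂ)+1)) else 0)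
                - (if 0 ≤ m+(-s) then ((m:ℂ)+(↑(-s):ℂ)+(β:ℂ)*((s:ℂ)+1)) * ((m:ℂ)+(β:ℂ)*((↑(-s):ℂ)+1)) else 0)
              else 0) else 0)
            = (n:ℂ) * (0 - ((m:ℂ)+(↑(-s):ℂ)+(β:ℂ)*((s:ℂ)+1)) * ((m:ℂ)+(β:ℂ)*((↑(-s):ℂ)+1))) := by
          intro m hmem
          rw [Finset.mem_Ico] at hmem
          have h1 : m < 0 := hmem.2
          have h2 : -|s| ≤ m := hmem.1
          have habs2 := abs_of_neg hs
          rw [if_pos h1, if_pos (show -s + s = 0 by omega),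
            if_neg (show ¬ (0:ℤ) ≤ m + s by omega),
            if_pos (show (0:ℤ) ≤ m + -s by omega)]
        rw [Finset.sum_congr rfl hterm, ← Finset.mul_sum,
          show -|s| = -(t:ℤ) by rw [abs_of_neg hs]; omega, sum_Ico_neg]
        have key : ∑ k ∈ Finset.range t,
            (0 - ((↑(-(k:ℤ)-1):ℂ)+(↑(-s):ℂ)+(β:ℂ)*((s:ℂ)+1)) * ((↑(-(k:ℤ)-1):ℂ)+(β:ℂ)*((↑(-s):ℂ)+1)))
            = - ∑ k ∈ Finset.range t,
              ((-(k:ℂ)-1)+((↑(-s):ℂ)+(β:ℂ)*((s:ℂ)+1)))*((-(k:ℂ)-1)+(β:ℂ)*((↑(-s):ℂ)+1)) := by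
          rw [← Finset.sum_neg_distrib]
          refine Finset.sum_congr rfl (fun k _ => ?_)
          push_cast
          ring
        rw [key, sum_range_quad]
        have hts : (t:ℂ) = -(s:ℂ) := by exact_mod_cast congrArg (fun x : ℤ => (x : ℂ)) ht
        rw [hts]
        push_cast
        ring
      · subst hs
        simp
      · -- s > 0
        set t : ℕ := s.toNat with htdef
        have ht : (t : ℤ) = s := Int.toNat_of_nonneg (by omega)
        have hterm : ∀ m ∈ Finset.Ico (-|s|) 0,
            (if m < 0 then (n:ℂ) *
              (if -s + s = 0 then
                (if 0 ≤ m+s then ((m:ℂ)+(s:ℂ)+(β:ℂ)*((↑(-s):ℂ)+1)) * ((m:ℂ)+(β:ℂ)*((s:ℂ)+1)) else 0)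
                - (if 0 ≤ m+(-s) then ((m:ℂ)+(↑(-s):ℂ)+(β:ℂ)*((s:ℂ)+1)) * ((m:ℂ)+(β:ℂ)*((↑(-s):ℂ)+1)) else 0)
              else 0) else 0)
            = (n:ℂ) * (((m:ℂ)+(s:ℂ)+(β:ℂ)*((↑(-s):ℂ)+1)) * ((m:ℂ)+(β:ℂ)*((s:ℂ)+1)) - 0) := by
          intro m hmem
          rw [Finset.mem_Ico] at hmem
          have h1 : m < 0 := hmem.2
          have h2 : -|s| ≤ m := hmem.1
          have habs2 := abs_of_pos hs
          rw [if_pos h1, if_pos (show -s + s = 0 by omega),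
            if_pos (show (0:ℤ) ≤ m + s by omega),
            if_neg (show ¬ (0:ℤ) ≤ m + -s by omega)]
        rw [Finset.sum_congr rfl hterm, ← Finset.mul_sum,
          show -|s| = -(t:ℤ) by rw [abs_of_pos hs]; omega, sum_Ico_neg]
        have key : ∑ k ∈ Finset.range t,
            ((((↑(-(k:ℤ)-1):ℂ))+(s:ℂ)+(β:ℂ)*((↑(-s):ℂ)+1)) * ((↑(-(k:ℤ)-1):ℂ)+(β:ℂ)*((s:ℂ)+1)) - 0)
            = ∑ k ∈ Finset.range t,
              ((-(k:ℂ)-1)+((s:ℂ)+(β:ℂ)*((↑(-s):ℂ)+1)))*((-(k:ℂ)-1)+(β:ℂ)*((s:ℂ)+1)) := by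
          refine Finset.sum_congr rfl (fun k _ => ?_)
          push_cast
          ring
        rw [key, sum_range_quad]
        have hts : (t:ℂ) = (s:ℂ) := by exact_mod_cast congrArg (fun x : ℤ => (x : ℂ)) ht
        rw [hts]
        push_cast
        ring
  · rw [if_neg hrs]
    have h0 : ∀ m : ℤ, (if m < 0 then (n:ℂ) *
        (if r + s = 0 then
          (if 0 ≤ m+s then ((m:ℂ)+(s:ℂ)+(β:ℂ)*((r:ℂ)+1)) * ((m:ℂ)+(β:ℂ)*((s:ℂ)+1)) else 0)
          - (if 0 ≤ m+r then ((m:ℂ)+(r:ℂ)+(β:ℂ)*((s:ℂ)+1)) * ((m:ℂ)+(β:ℂ)*((r:ℂ)+1)) else 0)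
        else 0) else 0) = 0 := by
      intro m
      rw [if_neg (show ¬ r + s = 0 by omega)]
      simp
    exact (finsum_congr h0).trans finsum_zero


end
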